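/- The canonical model of 2CH is a chromatic hypergraph: for each agent a ∈ A, the relation R_a is functional (if S_E R_a S_a and S_E R_a S'_a then S_a = S'_a), the relation R_a is surjective (for every MCS S_a of sort a there is an MCS S_E of the world sort with S_E R_a S_a), and for every MCS S_E of the world sort there exists an agent a ∈ A and an MCS S_a of sort a with S_E R_a S_a. -/

import Mathlib

/-! Generic propositional logic machinery -/

structure PLx where
  F : Type
  bot : F
  neg : F → F
  conj : F → F → F

namespace PLx
variable (L : PLx)

def impl (φ ψ : L.F) : L.F := L.neg (L.conj φ (L.neg ψ))
def disj (φ ψ : L.F) : L.F := L.neg (L.conj (L.neg φ) (L.neg ψ))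

def Taut (φ : L.F) : Prop :=
  ∀ v : L.F → Bool, v L.bot = false → (∀ ψ, v (L.neg ψ) = !(v ψ)) →
    (∀ ψ χ, v (L.conj ψ χ) = (v ψ && v χ)) → v φ = true

def listAnd : List L.F → L.F
  | [] => L.neg L.bot
  | φ :: r => L.conj φ (listAnd r)

def listOr : List L.F → L.F
  | [] => L.bot
  | φ :: r => L.disj φ (listOr r)

end PLx

structure PLSys (L : PLx) where
  Prv : L.F → Prop
  taut : ∀ {φ}, L.Taut φ → Prv φ
  mp : ∀ {φ ψ}, Prv (L.impl φ ψ) → Prv φ → Prv ψ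

namespace PLSys
variable {L : PLx} (S : PLSys L)

local notation "⊥'" => L.bot
local infixr:60 " ⟶ " => L.impl
local infixr:65 " ⋀' " => L.conj
local prefix:70 "∼" => L.neg

lemma mp2 {φ ψ χ} (h : S.Prv (φ ⟶ (ψ ⟶ χ))) (h1 : S.Prv φ) (h2 : S.Prv ψ) : S.Prv χ :=
  S.mp (S.mp h h1) h2

section tauts
variable (φ ψ χ X : L.F)

lemma t_refl : S.Prv (φ ⟶ φ) := S.taut (by
  intro v hb hn hc; simp only [PLx.impl, hn, hc]; cases v φ <;> rfl)

lemma imp_trans {φ ψ χ} (h1 : S.Prv (φ ⟶ ψ)) (h2 : S.Prv (ψ ⟶ χ)) : S.Prv (φ ⟶ χ) :=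
  S.mp2 (S.taut (φ := (φ ⟶ ψ) ⟶ ((ψ ⟶ χ) ⟶ (φ ⟶ χ))) (by
    intro v hb hn hc; simp only [PLx.impl, hn, hc]
    cases v φ <;> cases v ψ <;> cases v χ <;> rfl)) h1 h2

lemma weaken {φ} (X : L.F) (h : S.Prv φ) : S.Prv (X ⟶ φ) :=
  S.mp (S.taut (φ := φ ⟶ (X ⟶ φ)) (by
    intro v hb hn hc; simp only [PLx.impl, hn, hc]
    cases v φ <;> cases v X <;> rfl)) h

lemma and_left : S.Prv ((φ ⋀' ψ) ⟶ φ) := S.taut (by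
  intro v hb hn hc; simp only [PLx.impl, hn, hc]; cases v φ <;> cases v ψ <;> rfl)

lemma and_right : S.Prv ((φ ⋀' ψ) ⟶ ψ) := S.taut (by
  intro v hb hn hc; simp only [PLx.impl, hn, hc]; cases v φ <;> cases v ψ <;> rfl)

lemma and_intro {X φ ψ} (h1 : S.Prv (X ⟶ φ)) (h2 : S.Prv (X ⟶ ψ)) :
    S.Prv (X ⟶ (φ ⋀' ψ)) :=
  S.mp2 (S.taut (φ := (X ⟶ φ) ⟶ ((X ⟶ ψ) ⟶ (X ⟶ (φ ⋀' ψ)))) (by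
    intro v hb hn hc; simp only [PLx.impl, hn, hc]
    cases v X <;> cases v φ <;> cases v ψ <;> rfl)) h1 h2

lemma neg_intro {φ X} (h : S.Prv ((φ ⋀' X) ⟶ ⊥')) : S.Prv (X ⟶ ∼φ) :=
  S.mp (S.taut (φ := ((φ ⋀' X) ⟶ ⊥') ⟶ (X ⟶ ∼φ)) (by
    intro v hb hn hc; simp only [PLx.impl, hn, hc, hb]
    cases v X <;> cases v φ <;> rfl)) h

lemma imp_bot {X φ} (h1 : S.Prv (X ⟶ φ)) (h2 : S.Prv (X ⟶ ∼φ)) : S.Prv (X ⟶ ⊥') :=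
  S.mp2 (S.taut (φ := (X ⟶ φ) ⟶ ((X ⟶ ∼φ) ⟶ (X ⟶ ⊥'))) (by
    intro v hb hn hc; simp only [PLx.impl, hn, hc, hb]
    cases v X <;> cases v φ <;> rfl)) h1 h2

lemma imp_bot_of_neg {X φ} (h1 : S.Prv (X ⟶ φ)) (h2 : S.Prv (∼φ)) : S.Prv (X ⟶ ⊥') :=
  S.imp_bot h1 (S.weaken X h2)

lemma contrapos {φ ψ} (h : S.Prv (φ ⟶ ψ)) : S.Prv ((∼ψ) ⟶ (∼φ)) :=
  S.mp (S.taut (φ := (φ ⟶ ψ) ⟶ ((∼ψ) ⟶ (∼φ))) (by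
    intro v hb hn hc; simp only [PLx.impl, hn, hc]
    cases v φ <;> cases v ψ <;> rfl)) h

lemma imp_negbot (X : L.F) : S.Prv (X ⟶ ∼⊥') := S.taut (by
  intro v hb hn hc; simp only [PLx.impl, hn, hc, hb]; cases v X <;> rfl)

lemma dne (φ : L.F) : S.Prv ((∼∼φ) ⟶ φ) := S.taut (by
  intro v hb hn hc; simp only [PLx.impl, hn, hc]; cases v φ <;> rfl)

lemma dni (φ : L.F) : S.Prv (φ ⟶ ∼∼φ) := S.taut (by
  intro v hb hn hc; simp only [PLx.impl, hn, hc]; cases v φ <;> rfl)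

end tauts

lemma listAnd_mem {M : List L.F} {φ : L.F} (h : φ ∈ M) : S.Prv (L.listAnd M ⟶ φ) := by
  induction M with
  | nil => simp at h
  | cons χ r ih =>
    rcases List.mem_cons.1 h with rfl | h
    · exact S.and_left _ _
    · exact S.imp_trans (S.and_right _ _) (ih h)

lemma listAnd_intro {M N : List L.F} (h : ∀ φ ∈ N, S.Prv (L.listAnd M ⟶ φ)) :
    S.Prv (L.listAnd M ⟶ L.listAnd N) := by
  induction N with
  | nil => exact S.imp_negbot _
  | cons χ r ih =>
    exact S.and_intro (h χ (by simp)) (ih fun φ hφ => h φ (by simp [hφ]))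

/-! Consistency and MCS -/

def Con (T : Set L.F) : Prop :=
  ¬ ∃ M : List L.F, (∀ φ ∈ M, φ ∈ T) ∧ S.Prv (L.impl (L.listAnd M) L.bot)

def Mcs (T : Set L.F) : Prop :=
  S.Con T ∧ ∀ U : Set L.F, S.Con U → T ⊆ U → T = U

def Der (T : Set L.F) (φ : L.F) : Prop :=
  ∃ M : List L.F, (∀ ψ ∈ M, ψ ∈ T) ∧ S.Prv (L.impl (L.listAnd M) φ)

lemma der_of_mem {T : Set L.F} {φ : L.F} (h : φ ∈ T) : S.Der T φ :=
  ⟨[φ], by simpa using h, S.listAnd_mem (by simp)⟩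

lemma der_of_prv {T : Set L.F} {φ : L.F} (h : S.Prv φ) : S.Der T φ :=
  ⟨[], by simp, S.weaken _ h⟩

/-- Deduction-style lemma: if `T ∪ {φ}` is inconsistent then `T` derives `¬φ`. -/
lemma der_neg_of_incon {T : Set L.F} {φ : L.F} (h : ¬ S.Con (T ∪ {φ})) : S.Der T (∼φ) := by
  classical
  rcases not_not.1 h with ⟨M, hM, hprv⟩
  refine ⟨M.filter (fun χ => χ ≠ φ), ?_, ?_⟩
  · intro ψ hψ
    rw [List.mem_filter] at hψ
    rcases hM ψ hψ.1 with h | h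
    · exact h
    · exact absurd (by simpa using h) (by simpa using hψ.2)
  · apply S.neg_intro
    show S.Prv (L.impl (L.listAnd (φ :: M.filter (fun χ => χ ≠ φ))) L.bot)
    refine S.imp_trans (χ := L.bot) ?_ hprv
    apply S.listAnd_intro
    intro ψ hψ
    by_cases hc : ψ = φ
    · subst hc; exact S.listAnd_mem (by simp)
    · exact S.listAnd_mem (by simp [List.mem_filter, hψ, hc])

lemma mcs_closed {T : Set L.F} (hT : S.Mcs T) {φ : L.F} (h : S.Der T φ) : φ ∈ T := by
  classical
  by_contra hφ
  have hni : ¬ S.Con (T ∪ {φ}) := by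
    intro hcon
    have := hT.2 _ hcon (Set.subset_union_left)
    exact hφ (this ▸ Set.mem_union_right _ rfl)
  rcases S.der_neg_of_incon hni with ⟨M, hM, hprv⟩
  rcases h with ⟨N, hN, hNprv⟩
  refine hT.1 ⟨M ++ N, by intro ψ hψ; rcases List.mem_append.1 hψ with h | h; exacts [hM ψ h, hN ψ h], ?_⟩
  have hMN_M : S.Prv (L.impl (L.listAnd (M ++ N)) (L.listAnd M)) :=
    S.listAnd_intro fun ψ hψ => S.listAnd_mem (by simp [hψ])
  have hMN_N : S.Prv (L.impl (L.listAnd (M ++ N)) (L.listAnd N)) :=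
    S.listAnd_intro fun ψ hψ => S.listAnd_mem (by simp [hψ])
  exact S.imp_bot (S.imp_trans hMN_N hNprv) (S.imp_trans hMN_M hprv)

lemma mcs_mem_of_prv {T : Set L.F} (hT : S.Mcs T) {φ : L.F} (h : S.Prv φ) : φ ∈ T :=
  S.mcs_closed hT (S.der_of_prv h)

lemma mcs_closed2 {T : Set L.F} (hT : S.Mcs T) {φ ψ : L.F} (hφ : φ ∈ T)
    (h : S.Prv (L.impl φ ψ)) : ψ ∈ T :=
  S.mcs_closed hT ⟨[φ], by simpa using hφ, S.imp_trans (S.listAnd_mem (by simp)) h⟩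

lemma mcs_not_both {T : Set L.F} (hT : S.Mcs T) {φ : L.F} (h1 : φ ∈ T) (h2 : ∼φ ∈ T) : False := by
  refine hT.1 ⟨[φ, ∼φ], ?_, ?_⟩
  · intro ψ hψ
    simp only [List.mem_cons, List.not_mem_nil, or_false] at hψ
    rcases hψ with rfl | rfl; exacts [h1, h2]
  exact S.imp_bot (S.listAnd_mem (φ := φ) (by simp)) (S.listAnd_mem (φ := L.neg φ) (by simp))

lemma mcs_neg_mem {T : Set L.F} (hT : S.Mcs T) {φ : L.F} (h : φ ∉ T) : ∼φ ∈ T := by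
  apply S.mcs_closed hT
  apply S.der_neg_of_incon
  intro hcon
  have := hT.2 _ hcon (Set.subset_union_left)
  exact h (this ▸ Set.mem_union_right _ rfl)

lemma mcs_bot_not_mem {T : Set L.F} (hT : S.Mcs T) : L.bot ∉ T := fun h =>
  hT.1 ⟨[L.bot], by simpa using h, S.listAnd_mem (by simp)⟩

lemma mcs_or_elim {T : Set L.F} (hT : S.Mcs T) {φ ψ : L.F} (h : L.disj φ ψ ∈ T) :
    φ ∈ T ∨ ψ ∈ T := by
  by_cases hφ : φ ∈ T
  · exact Or.inl hφ
  right
  have hnφ : ∼φ ∈ T := S.mcs_neg_mem hT hφ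
  refine S.mcs_closed hT ⟨[L.disj φ ψ, ∼φ], ?_, ?_⟩
  · intro χ hχ
    simp only [List.mem_cons, List.not_mem_nil, or_false] at hχ
    rcases hχ with rfl | rfl; exacts [h, hnφ]
  refine S.taut ?_
  intro v hb hn hc
  simp only [PLx.impl, PLx.disj, PLx.listAnd, hn, hc, hb]
  cases v φ <;> cases v ψ <;> rfl

lemma mcs_listOr_elim {T : Set L.F} (hT : S.Mcs T) :
    ∀ {M : List L.F}, L.listOr M ∈ T → ∃ φ ∈ M, φ ∈ T := by
  intro M
  induction M with
  | nil => intro h; exact absurd h (S.mcs_bot_not_mem hT)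
  | cons χ r ih =>
    intro h
    rcases S.mcs_or_elim hT h with h | h
    · exact ⟨χ, by simp, h⟩
    · rcases ih h with ⟨φ, h1, h2⟩; exact ⟨φ, by simp [h1], h2⟩

/-- Lindenbaum's lemma. -/
lemma lindenbaum {T : Set L.F} (hT : S.Con T) : ∃ U, T ⊆ U ∧ S.Mcs U := by
  have hzorn := zorn_subset_nonempty {U : Set L.F | S.Con U} ?_ T hT
  · rcases hzorn with ⟨U, hTU, hU, hmax⟩
    exact ⟨U, hTU, hU, fun V hV hUV => (hmax hV hUV).antisymm hUV |>.symm⟩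
  · intro c hc hchain hne
    refine ⟨⋃₀ c, ?_, fun s hs => Set.subset_sUnion_of_mem hs⟩
    intro ⟨M, hM, hprv⟩
    have : ∃ t ∈ c, ∀ φ ∈ M, φ ∈ t := by
      clear hprv
      induction M with
      | nil => rcases hne with ⟨t, ht⟩; exact ⟨t, ht, by simp⟩
      | cons χ r ih =>
        rcases ih (fun φ hφ => hM φ (by simp [hφ])) with ⟨t, htc, ht⟩
        rcases hM χ (by simp) with ⟨s, hsc, hχs⟩
        rcases hchain.total htc hsc with h | h
        · exact ⟨s, hsc, fun φ hφ => by
            rcases List.mem_cons.1 hφ with rfl | hφ; exacts [hχs, h (ht φ hφ)]⟩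
        · exact ⟨t, htc, fun φ hφ => by
            rcases List.mem_cons.1 hφ with rfl | hφ; exacts [h hχs, ht φ hφ]⟩
    rcases this with ⟨t, htc, ht⟩
    exact hc htc ⟨M, ht, hprv⟩

end PLSys


/-! ## Syntax of the two-level chromatic hypergraph logic 2CH -/

mutual
/-- Agent formulas of sort `a`, for each agent `a : A`. -/
inductive AForm (A : Type) (APa : A → Type) (APe : Type) : A → Type where
  | atom {a : A} : APa a → AForm A APa APe a
  | bot  {a : A} : AForm A APa APe a
  | neg  {a : A} : AForm A APa APe a → AForm A APa APe a
  | and  {a : A} : AForm A APa APe a → AForm A APa APe a → AForm A APa APe a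
  | dia  (a : A) : WForm A APa APe → AForm A APa APe a

/-- World formulas. -/
inductive WForm (A : Type) (APa : A → Type) (APe : Type) : Type where
  | atom : APe → WForm A APa APe
  | bot  : WForm A APa APe
  | neg  : WForm A APa APe → WForm A APa APe
  | and  : WForm A APa APe → WForm A APa APe → WForm A APa APe
  | exi  (a : A) : AForm A APa APe a → WForm A APa APe
end

variable {A : Type} {APa : A → Type} {APe : Type}

/-- Implication of agent formulas. -/
def implA {a : A} (φ ψ : AForm A APa APe a) : AForm A APa APe a := .neg (.and φ (.neg ψ))
/-- Disjunction of agent formulas. -/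
def orA {a : A} (φ ψ : AForm A APa APe a) : AForm A APa APe a := .neg (.and (.neg φ) (.neg ψ))
/-- `⊤` as an agent formula. -/
def topA (a : A) : AForm A APa APe a := .neg .bot
/-- Implication of world formulas. -/
def implW (Φ Ψ : WForm A APa APe) : WForm A APa APe := .neg (.and Φ (.neg Ψ))
/-- Disjunction of world formulas. -/
def orW (Φ Ψ : WForm A APa APe) : WForm A APa APe := .neg (.and (.neg Φ) (.neg Ψ))
/-- The dual modality `□_a Φ := ¬◇_a ¬Φ`. -/
def boxF (a : A) (Φ : WForm A APa APe) : AForm A APa APe a := .neg (.dia a (.neg Φ))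
/-- The dual modality `A_a φ := ¬E_a ¬φ`. -/
def allF (a : A) (φ : AForm A APa APe a) : WForm A APa APe := .neg (.exi a (.neg φ))
/-- Finite disjunction of a list of world formulas. -/
def listOrW : List (WForm A APa APe) → WForm A APa APe
  | [] => .bot
  | Φ :: rest => orW Φ (listOrW rest)

/-- The non-emptiness axiom `⋁_{a∈A} E_a ⊤`. -/
noncomputable def neAxiom (A : Type) [Fintype A] (APa : A → Type) (APe : Type) : WForm A APa APe :=
  listOrW (((Finset.univ : Finset A).toList).map fun a => WForm.exi a (topA a))

/-- `φ` is an instance of a classical propositional tautology (agent sort):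
every Boolean valuation respecting `⊥`, `¬`, `∧` makes it true. -/
def ATaut {a : A} (φ : AForm A APa APe a) : Prop :=
  ∀ v : AForm A APa APe a → Bool,
    v .bot = false →
    (∀ ψ : AForm A APa APe a, v ψ.neg = !(v ψ)) →
    (∀ ψ χ : AForm A APa APe a, v (ψ.and χ) = (v ψ && v χ)) →
    v φ = true

/-- `Φ` is an instance of a classical propositional tautology (world sort). -/
def WTaut (Φ : WForm A APa APe) : Prop :=
  ∀ v : WForm A APa APe → Bool,
    v .bot = false →
    (∀ Ψ : WForm A APa APe, v Ψ.neg = !(v Ψ)) →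
    (∀ Ψ Χ : WForm A APa APe, v (Ψ.and Χ) = (v Ψ && v Χ)) →
    v Φ = true

/-! ## The proof system of 2CH -/

mutual
/-- Derivability `⊢_a` of agent formulas of sort `a`. -/
inductive ProveA (A : Type) [Fintype A] (APa : A → Type) (APe : Type) :
    ∀ {a : A}, AForm A APa APe a → Prop where
  | taut {a : A} {φ : AForm A APa APe a} : ATaut φ → ProveA A APa APe φ
  | mp {a : A} {φ ψ : AForm A APa APe a} :
      ProveA A APa APe (implA φ ψ) → ProveA A APa APe φ → ProveA A APa APe ψ
  | nec {a : A} {Φ : WForm A APa APe} :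
      ProveE A APa APe Φ → ProveA A APa APe (boxF a Φ)
  | monoDia {a : A} {Φ Ψ : WForm A APa APe} :
      ProveE A APa APe (implW Φ Ψ) →
      ProveA A APa APe (implA (AForm.dia a Φ) (AForm.dia a Ψ))
  | monoBox {a : A} {Φ Ψ : WForm A APa APe} :
      ProveE A APa APe (implW Φ Ψ) →
      ProveA A APa APe (implA (boxF a Φ) (boxF a Ψ))
  | adj1 {a : A} {Φ : WForm A APa APe} {ψ : AForm A APa APe a} :
      ProveE A APa APe (implW Φ (allF a ψ)) →
      ProveA A APa APe (implA (AForm.dia a Φ) ψ)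
  | adj2 {a : A} {φ : AForm A APa APe a} {Ψ : WForm A APa APe} :
      ProveE A APa APe (implW (WForm.exi a φ) Ψ) →
      ProveA A APa APe (implA φ (boxF a Ψ))
  | surj {a : A} {φ : AForm A APa APe a} :
      ProveA A APa APe (implA φ (AForm.dia a (WForm.exi a φ)))
  | func {a : A} {φ : AForm A APa APe a} :
      ProveA A APa APe (implA (AForm.dia a (WForm.exi a φ)) φ)

/-- Derivability `⊢_e` of world formulas. -/
inductive ProveE (A : Type) [Fintype A] (APa : A → Type) (APe : Type) :
    WForm A APa APe → Prop where
  | taut {Φ : WForm A APa APe} : WTaut Φ → ProveE A APa APe Φ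
  | mp {Φ Ψ : WForm A APa APe} :
      ProveE A APa APe (implW Φ Ψ) → ProveE A APa APe Φ → ProveE A APa APe Ψ
  | nec {a : A} {φ : AForm A APa APe a} :
      ProveA A APa APe φ → ProveE A APa APe (allF a φ)
  | monoExi {a : A} {φ ψ : AForm A APa APe a} :
      ProveA A APa APe (implA φ ψ) →
      ProveE A APa APe (implW (WForm.exi a φ) (WForm.exi a ψ))
  | monoAll {a : A} {φ ψ : AForm A APa APe a} :
      ProveA A APa APe (implA φ ψ) →
      ProveE A APa APe (implW (allF a φ) (allF a ψ))
  | adj1 {a : A} {Φ : WForm A APa APe} {ψ : AForm A APa APe a} :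
      ProveA A APa APe (implA (AForm.dia a Φ) ψ) →
      ProveE A APa APe (implW Φ (allF a ψ))
  | adj2 {a : A} {φ : AForm A APa APe a} {Ψ : WForm A APa APe} :
      ProveA A APa APe (implA φ (boxF a Ψ)) →
      ProveE A APa APe (implW (WForm.exi a φ) Ψ)
  | nonempty : ProveE A APa APe (neAxiom A APa APe)
end

/-! ## Chromatic hypergraphs and their models -/

/-- A chromatic hypergraph over the set of agents `A`. -/
structure ChromHyp (A : Type) where
  /-- hyperedges (worlds) -/
  E : Type
  /-- views of agent `a` -/
  V : A → Type
  /-- the surjective partial function assigning to a hyperedge the view of agent `a` in it -/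
  proj : ∀ a : A, E → Option (V a)
  surj : ∀ (a : A) (v : V a), ∃ e : E, proj a e = some v
  edge_nonempty : ∀ e : E, ∃ a : A, (proj a e).isSome

/-- A chromatic hypergraph model: a chromatic hypergraph together with valuations. -/
structure ChromHypModel (A : Type) (APa : A → Type) (APe : Type) extends ChromHyp A where
  valA : ∀ a : A, APa a → Set (V a)
  valE : APe → Set E

mutual
/-- Satisfaction `H, v ⊨_a φ` of an agent formula at a view of agent `a`. -/
def SatA (H : ChromHypModel A APa APe) : ∀ (a : A), H.V a → AForm A APa APe a → Prop
  | a, v, .atom p => v ∈ H.valA a p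
  | _, _, .bot => False
  | a, v, .neg φ => ¬ SatA H a v φ
  | a, v, .and φ ψ => SatA H a v φ ∧ SatA H a v ψ
  | a, v, .dia _ Φ => ∃ e : H.E, H.proj a e = some v ∧ SatE H e Φ

/-- Satisfaction `H, e ⊨_e Φ` of a world formula at a hyperedge. -/
def SatE (H : ChromHypModel A APa APe) : H.E → WForm A APa APe → Prop
  | e, .atom p => e ∈ H.valE p
  | _, .bot => False
  | e, .neg Φ => ¬ SatE H e Φ
  | e, .and Φ Ψ => SatE H e Φ ∧ SatE H e Ψ
  | e, .exi a φ => ∃ v : H.V a, H.proj a e = some v ∧ SatA H a v φ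
end


/-! ## Consistent and maximal consistent sets -/

variable (A : Type) [Fintype A] (APa : A → Type) (APe : Type)

/-- Finite conjunction of a list of agent formulas. -/
def listAndA {a : A} : List (AForm A APa APe a) → AForm A APa APe a
  | [] => topA a
  | φ :: rest => .and φ (listAndA rest)

/-- Finite conjunction of a list of world formulas. -/
def listAndW : List (WForm A APa APe) → WForm A APa APe
  | [] => .neg .bot
  | Φ :: rest => .and Φ (listAndW rest)

/-- A set of agent formulas of sort `a` is consistent if `⊥` is not derivable from it. -/
def AConsistent {a : A} (S : Set (AForm A APa APe a)) : Prop :=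
  ¬ ∃ L : List (AForm A APa APe a), (∀ φ ∈ L, φ ∈ S) ∧
      ProveA A APa APe (implA (listAndA A APa APe L) AForm.bot)

/-- A set of world formulas is consistent if `⊥` is not derivable from it. -/
def WConsistent (S : Set (WForm A APa APe)) : Prop :=
  ¬ ∃ L : List (WForm A APa APe), (∀ Φ ∈ L, Φ ∈ S) ∧
      ProveE A APa APe (implW (listAndW A APa APe L) WForm.bot)

/-- A maximal consistent set (MCS) of agent formulas of sort `a`. -/
def AMCS {a : A} (S : Set (AForm A APa APe a)) : Prop :=
  AConsistent A APa APe S ∧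
    ∀ T : Set (AForm A APa APe a), AConsistent A APa APe T → S ⊆ T → S = T

/-- A maximal consistent set (MCS) of world formulas. -/
def WMCS (S : Set (WForm A APa APe)) : Prop :=
  WConsistent A APa APe S ∧
    ∀ T : Set (WForm A APa APe), WConsistent A APa APe T → S ⊆ T → S = T

/-- The relation `R_a` of the canonical model between world-sort MCSs and sort-`a` MCSs:
`S_E R_a S_a` iff for every world formula `Φ ∈ S_E`, `◇_a Φ ∈ S_a`. -/
def canonR (a : A) (SE : Set (WForm A APa APe)) (Sa : Set (AForm A APa APe a)) : Prop :=
  ∀ Φ : WForm A APa APe, Φ ∈ SE → AForm.dia a Φ ∈ Sa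


/-! ## Bridging the generic machinery to the two sorts of 2CH -/

section Bridge

@[reducible] def plA (A : Type) (APa : A → Type) (APe : Type) (a : A) : PLx :=
  ⟨AForm A APa APe a, .bot, .neg, .and⟩

@[reducible] def plW (A : Type) (APa : A → Type) (APe : Type) : PLx :=
  ⟨WForm A APa APe, .bot, .neg, .and⟩

def sysA (A : Type) [Fintype A] (APa : A → Type) (APe : Type) (a : A) :
    PLSys (plA A APa APe a) where
  Prv := fun φ => ProveA A APa APe φ
  taut := fun h => ProveA.taut h
  mp := fun h1 h2 => ProveA.mp h1 h2

def sysW (A : Type) [Fintype A] (APa : A → Type) (APe : Type) :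
    PLSys (plW A APa APe) where
  Prv := fun Φ => ProveE A APa APe Φ
  taut := fun h => ProveE.taut h
  mp := fun h1 h2 => ProveE.mp h1 h2

variable (A : Type) [Fintype A] (APa : A → Type) (APe : Type)
set_option linter.unusedSectionVars false

lemma listAnd_plA (a : A) : ∀ M : List (AForm A APa APe a),
    (plA A APa APe a).listAnd M = listAndA A APa APe M
  | [] => rfl
  | φ :: r => by
      show AForm.and φ ((plA A APa APe a).listAnd r) = _
      rw [listAnd_plA a r]; rfl

lemma listAnd_plW : ∀ M : List (WForm A APa APe),
    (plW A APa APe).listAnd M = listAndW A APa APe M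
  | [] => rfl
  | Φ :: r => by
      show WForm.and Φ ((plW A APa APe).listAnd r) = _
      rw [listAnd_plW r]; rfl

lemma listOr_plW : ∀ M : List (WForm A APa APe),
    (plW A APa APe).listOr M = listOrW M
  | [] => rfl
  | Φ :: r => by
      show WForm.neg (.and (.neg Φ) (.neg ((plW A APa APe).listOr r))) = _
      rw [listOr_plW r]; rfl

lemma aconsistent_iff (a : A) (T : Set (AForm A APa APe a)) :
    AConsistent A APa APe T ↔ (sysA A APa APe a).Con T := by
  unfold AConsistent PLSys.Con
  simp only [listAnd_plA]
  exact Iff.rfl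

lemma wconsistent_iff (T : Set (WForm A APa APe)) :
    WConsistent A APa APe T ↔ (sysW A APa APe).Con T := by
  unfold WConsistent PLSys.Con
  simp only [listAnd_plW]
  exact Iff.rfl

lemma amcs_iff (a : A) (T : Set (AForm A APa APe a)) :
    AMCS A APa APe T ↔ (sysA A APa APe a).Mcs T := by
  unfold AMCS PLSys.Mcs
  simp only [aconsistent_iff]

lemma wmcs_iff (T : Set (WForm A APa APe)) :
    WMCS A APa APe T ↔ (sysW A APa APe).Mcs T := by
  unfold WMCS PLSys.Mcs
  simp only [wconsistent_iff]

/-! ## Derived modal lemmas -/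

/-- `⊢_a ⊤`. -/
lemma topPrv (a : A) : ProveA A APa APe (topA a) :=
  ProveA.taut (by intro v hb hn _; simp [topA, hn, hb])

/-- counit : `⊢_e E_a □_a Ψ → Ψ`. -/
lemma counitE (a : A) (Ψ : WForm A APa APe) :
    ProveE A APa APe (implW (.exi a (boxF a Ψ)) Ψ) :=
  ProveE.adj2 ((sysA A APa APe a).t_refl (boxF a Ψ))

/-- unit : `⊢_a φ → □_a E_a φ`. -/
lemma unitBox (a : A) (φ : AForm A APa APe a) :
    ProveA A APa APe (implA φ (boxF a (.exi a φ))) :=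
  ProveA.adj2 ((sysW A APa APe).t_refl (WForm.exi a φ))

/-- K-style lemma : `⊢_a □_a Φ ∧ □_a Ψ → □_a (Φ ∧ Ψ)`. -/
lemma boxK (a : A) (Φ Ψ : WForm A APa APe) :
    ProveA A APa APe (implA (.and (boxF a Φ) (boxF a Ψ)) (boxF a (.and Φ Ψ))) := by
  apply ProveA.adj2
  refine (sysW A APa APe).and_intro ?_ ?_
  · exact (sysW A APa APe).imp_trans
      (ProveE.monoExi ((sysA A APa APe a).and_left (boxF a Φ) (boxF a Ψ)))
      (counitE A APa APe a Φ)
  · exact (sysW A APa APe).imp_trans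
      (ProveE.monoExi ((sysA A APa APe a).and_right (boxF a Φ) (boxF a Ψ)))
      (counitE A APa APe a Ψ)

/-- `⊢_a □_a ¬⊥`. -/
lemma boxTopPrv (a : A) : ProveA A APa APe (boxF a (.neg .bot)) :=
  ProveA.nec (ProveE.taut (by intro v hb hn _; simp [hn, hb]))

/-- `⊢_a ◇_a ¬⊥`. -/
lemma diaNegBot (a : A) : ProveA A APa APe (.dia a (.neg .bot)) := by
  have h1 : ProveA A APa APe (.dia a (.exi a (topA a))) :=
    ProveA.mp ProveA.surj (topPrv A APa APe a)
  exact ProveA.mp (ProveA.monoDia ((sysW A APa APe).imp_negbot (WForm.exi a (topA a)))) h1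

/-- `⊢_a ¬ □_a ⊥`. -/
lemma notBoxBot (a : A) : ProveA A APa APe (.neg (boxF a .bot)) :=
  ProveA.mp ((sysA A APa APe a).dni (AForm.dia a (.neg .bot))) (diaNegBot A APa APe a)

/-- `⊢_a ⋀ □_a Φᵢ → □_a ⋀ Φᵢ`. -/
lemma boxListAnd (a : A) : ∀ M : List (WForm A APa APe),
    ProveA A APa APe (implA (listAndA A APa APe (M.map (boxF a))) (boxF a (listAndW A APa APe M)))
  | [] => (sysA A APa APe a).weaken _ (boxTopPrv A APa APe a)
  | Φ :: M => by
      show ProveA A APa APe (implA (.and (boxF a Φ) (listAndA A APa APe (M.map (boxF a))))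
        (boxF a (.and Φ (listAndW A APa APe M))))
      refine (sysA A APa APe a).imp_trans
        ((sysA A APa APe a).and_intro (φ := boxF a Φ) (ψ := boxF a (listAndW A APa APe M))
          ((sysA A APa APe a).and_left _ _)
          ((sysA A APa APe a).imp_trans ((sysA A APa APe a).and_right _ _)
            (boxListAnd a M)))
        (boxK A APa APe a Φ (listAndW A APa APe M))

/-- `⊢_a ◇_a ⋀ Φᵢ → ⋀ ◇_a Φᵢ`. -/
lemma diaListAnd (a : A) : ∀ M : List (WForm A APa APe),
    ProveA A APa APe (implA (.dia a (listAndW A APa APe M)) (listAndA A APa APe (M.map (.dia a))))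
  | [] => (sysA A APa APe a).imp_negbot _
  | Φ :: M => by
      show ProveA A APa APe (implA (.dia a (.and Φ (listAndW A APa APe M)))
        (.and (.dia a Φ) (listAndA A APa APe (M.map (.dia a)))))
      refine (sysA A APa APe a).and_intro ?_ ?_
      · exact ProveA.monoDia ((sysW A APa APe).and_left Φ (listAndW A APa APe M))
      · exact (sysA A APa APe a).imp_trans
          (ProveA.monoDia ((sysW A APa APe).and_right Φ (listAndW A APa APe M)))
          (diaListAnd a M)

end Bridge

/-- The canonical model of 2CH is a chromatic hypergraph: each relation `R_a` is
functional and surjective, and every world-sort MCS is related to some sort-`a` MCS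
for at least one agent `a`. -/
theorem canonical_model_is_chromatic_hypergraph
    (A : Type) [Fintype A] (APa : A → Type) (APe : Type) :
    (∀ (a : A) (SE : Set (WForm A APa APe)) (Sa Sa' : Set (AForm A APa APe a)),
      WMCS A APa APe SE → AMCS A APa APe Sa → AMCS A APa APe Sa' →
      canonR A APa APe a SE Sa → canonR A APa APe a SE Sa' → Sa = Sa') ∧
    (∀ (a : A) (Sa : Set (AForm A APa APe a)), AMCS A APa APe Sa →
      ∃ SE : Set (WForm A APa APe), WMCS A APa APe SE ∧ canonR A APa APe a SE Sa) ∧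
    (∀ SE : Set (WForm A APa APe), WMCS A APa APe SE →
      ∃ (a : A) (Sa : Set (AForm A APa APe a)), AMCS A APa APe Sa ∧
        canonR A APa APe a SE Sa) := by
  classical
  refine ⟨?_, ?_, ?_⟩
  -- Part 1: functionality of `R_a`
  · intro a SE Sa Sa' hSEw hSaA hSa'A hR hR'
    have hSE := (wmcs_iff A APa APe SE).1 hSEw
    have hSa := (amcs_iff A APa APe a Sa).1 hSaA
    have hSa' := (amcs_iff A APa APe a Sa').1 hSa'A
    have key : ∀ (Ta Ta' : Set (AForm A APa APe a)),
        (sysA A APa APe a).Mcs Ta → (sysA A APa APe a).Mcs Ta' →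
        canonR A APa APe a SE Ta → canonR A APa APe a SE Ta' → Ta ⊆ Ta' := by
      intro Ta Ta' hTa hTa' hRa hRa' φ hφ
      have hbox : boxF a (.exi a φ) ∈ Ta :=
        (sysA A APa APe a).mcs_closed2 hTa hφ (unitBox A APa APe a φ)
      have hE : WForm.exi a φ ∈ SE := by
        by_contra hnE
        have hneg : WForm.neg (.exi a φ) ∈ SE := (sysW A APa APe).mcs_neg_mem hSE hnE
        have hdia : AForm.dia a (.neg (.exi a φ)) ∈ Ta := hRa _ hneg
        exact (sysA A APa APe a).mcs_not_both hTa hdia hbox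
      have hdia' : AForm.dia a (.exi a φ) ∈ Ta' := hRa' _ hE
      exact (sysA A APa APe a).mcs_closed2 hTa' hdia' ProveA.func
    exact Set.Subset.antisymm (key Sa Sa' hSa hSa' hR hR') (key Sa' Sa hSa' hSa hR' hR)
  -- Part 2: surjectivity of `R_a`
  · intro a Sa hSaA
    have hSa := (amcs_iff A APa APe a Sa).1 hSaA
    have hcon : (sysW A APa APe).Con {Φ | boxF a Φ ∈ Sa} := by
      rintro ⟨M, hM, hprv⟩
      rw [listAnd_plW] at hprv
      have step1 : ProveA A APa APe
          (implA (listAndA A APa APe (M.map (boxF a))) (boxF a .bot)) :=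
        (sysA A APa APe a).imp_trans (boxListAnd A APa APe a M) (ProveA.monoBox hprv)
      have step2 := (sysA A APa APe a).imp_bot_of_neg step1 (notBoxBot A APa APe a)
      refine hSa.1 ⟨M.map (boxF a), ?_, ?_⟩
      · intro ψ hψ; rcases List.mem_map.1 hψ with ⟨Φ, hΦ, rfl⟩; exact hM Φ hΦ
      · rw [listAnd_plA]; exact step2
    obtain ⟨SE, hsub, hSEmcs⟩ := (sysW A APa APe).lindenbaum hcon
    refine ⟨SE, (wmcs_iff A APa APe SE).2 hSEmcs, ?_⟩
    intro Φ hΦ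
    by_contra hnd
    have hneg : AForm.neg (.dia a Φ) ∈ Sa := (sysA A APa APe a).mcs_neg_mem hSa hnd
    have hbox : boxF a (.neg Φ) ∈ Sa :=
      (sysA A APa APe a).mcs_closed2 hSa hneg
        ((sysA A APa APe a).contrapos (ProveA.monoDia ((sysW A APa APe).dne Φ)))
    exact (sysW A APa APe).mcs_not_both hSEmcs hΦ (hsub hbox)
  -- Part 3: every world MCS has a related agent MCS
  · intro SE hSEw
    have hSE := (wmcs_iff A APa APe SE).1 hSEw
    have hne : neAxiom A APa APe ∈ SE :=
      (sysW A APa APe).mcs_mem_of_prv hSE ProveE.nonempty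
    have hne' : (plW A APa APe).listOr
        (((Finset.univ : Finset A).toList).map fun a => WForm.exi a (topA a)) ∈ SE := by
      rw [listOr_plW]; exact hne
    obtain ⟨Φ, hΦmem, hΦSE⟩ := (sysW A APa APe).mcs_listOr_elim hSE hne'
    obtain ⟨a, -, rfl⟩ := List.mem_map.1 hΦmem
    refine ⟨a, ?_⟩
    have hcon : (sysA A APa APe a).Con ((fun Φ => AForm.dia a Φ) '' SE) := by
      rintro ⟨M, hM, hprv⟩
      rw [listAnd_plA] at hprv
      have key : ∀ M : List (AForm A APa APe a),
          (∀ φ ∈ M, φ ∈ (fun Φ => AForm.dia a Φ) '' SE) →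
          ∃ Ms : List (WForm A APa APe), (∀ Φ ∈ Ms, Φ ∈ SE) ∧ M = Ms.map (AForm.dia a) := by
        intro M
        induction M with
        | nil => exact fun _ => ⟨[], by simp, rfl⟩
        | cons ψ M ih =>
          intro hM
          obtain ⟨Ms, h1, h2⟩ := ih (fun χ hχ => hM χ (by simp [hχ]))
          obtain ⟨Φ, hΦ, rfl⟩ := hM ψ (by simp)
          refine ⟨Φ :: Ms, ?_, by simp [h2]⟩
          intro χ hχ
          rcases List.mem_cons.1 hχ with rfl | hχ
          exacts [hΦ, h1 χ hχ]
      obtain ⟨Ms, hMs, rfl⟩ := key M hM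
      have h1 : ProveA A APa APe (implA (.dia a (listAndW A APa APe Ms)) AForm.bot) :=
        (sysA A APa APe a).imp_trans (diaListAnd A APa APe a Ms) hprv
      have h2 : ProveE A APa APe (implW (listAndW A APa APe Ms) (allF a .bot)) :=
        ProveE.adj1 h1
      have h3 : allF a (.bot) ∈ SE :=
        (sysW A APa APe).mcs_closed hSE ⟨Ms, hMs, by rw [listAnd_plW]; exact h2⟩
      exact (sysW A APa APe).mcs_not_both hSE hΦSE h3
    obtain ⟨Sa, hsub, hSaMcs⟩ := (sysA A APa APe a).lindenbaum hcon
    exact ⟨Sa, (amcs_iff A APa APe a Sa).2 hSaMcs, fun Φ hΦ => hsub ⟨Φ, hΦ, rfl⟩⟩
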